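/- Let c : ℝ → ℝ be continuously differentiable and let u : ℝ × ℝ → ℝ be twice continuously differentiable on an open set Ω ⊆ ℝ² with c(u(t,x)) > 0 and u_tt = c(u)² u_xx on Ω. Then the weighted Riemann variable R/√(c(u)) satisfies, at every point of Ω, D₋( R/√(c(u)) ) = −( c'(u) / (2 c(u)^{3/2}) ) · S², where R := u_t + c(u)u_x, S := u_t − c(u)u_x and D₋F := F_t − c(u)F_x. In particular, if c'(θ) ≥ 0 for all θ, then D₋( R/√(c(u)) ) ≤ 0 on Ω. -/

import Mathlib

open Filter Topology

/-- Partial derivative in the first (time) variable. -/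
noncomputable def pdt (u : ℝ × ℝ → ℝ) : ℝ × ℝ → ℝ :=
  fun p => deriv (fun s => u (s, p.2)) p.1

/-- Partial derivative in the second (space) variable. -/
noncomputable def pdx (u : ℝ × ℝ → ℝ) : ℝ × ℝ → ℝ :=
  fun p => deriv (fun y => u (p.1, y)) p.2

/-- The Riemann variable `R = u_t + c(u) u_x`. -/
noncomputable def Rv (c : ℝ → ℝ) (u : ℝ × ℝ → ℝ) : ℝ × ℝ → ℝ :=
  fun p => pdt u p + c (u p) * pdx u p

/-- The Riemann variable `S = u_t - c(u) u_x`. -/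
noncomputable def Sv (c : ℝ → ℝ) (u : ℝ × ℝ → ℝ) : ℝ × ℝ → ℝ :=
  fun p => pdt u p - c (u p) * pdx u p

theorem pdt_eq' {H : ℝ × ℝ → ℝ} {p : ℝ × ℝ} (h : DifferentiableAt ℝ H p) :
    pdt H p = fderiv ℝ H p (1, 0) := by
  have hg : HasDerivAt (fun s : ℝ => (s, p.2)) ((1 : ℝ), (0 : ℝ)) p.1 :=
    (hasDerivAt_id p.1).prodMk (hasDerivAt_const p.1 p.2)
  have h' : HasFDerivAt H (fderiv ℝ H p) ((p.1 : ℝ), p.2) := by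
    rw [Prod.mk.eta]; exact h.hasFDerivAt
  have := h'.comp_hasDerivAt p.1 hg
  simpa [pdt, Function.comp_def] using this.deriv

theorem pdx_eq' {H : ℝ × ℝ → ℝ} {p : ℝ × ℝ} (h : DifferentiableAt ℝ H p) :
    pdx H p = fderiv ℝ H p (0, 1) := by
  have hg : HasDerivAt (fun y : ℝ => (p.1, y)) ((0 : ℝ), (1 : ℝ)) p.2 :=
    (hasDerivAt_const p.2 p.1).prodMk (hasDerivAt_id p.2)
  have h' : HasFDerivAt H (fderiv ℝ H p) ((p.1 : ℝ), p.2) := by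
    rw [Prod.mk.eta]; exact h.hasFDerivAt
  have := h'.comp_hasDerivAt p.2 hg
  simpa [pdx, Function.comp_def] using this.deriv

theorem pdt_congr' {H G : ℝ × ℝ → ℝ} {p : ℝ × ℝ} (h : H =ᶠ[𝓝 p] G) : pdt H p = pdt G p := by
  have ht : Filter.Tendsto (fun s : ℝ => (s, p.2)) (𝓝 p.1) (𝓝 p) := by
    conv_rhs => rw [← Prod.mk.eta (p := p)]
    exact (continuous_id.prodMk continuous_const).tendsto p.1
  exact Filter.EventuallyEq.deriv_eq (h.comp_tendsto ht)

theorem pdx_congr' {H G : ℝ × ℝ → ℝ} {p : ℝ × ℝ} (h : H =ᶠ[𝓝 p] G) : pdx H p = pdx G p := by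
  have ht : Filter.Tendsto (fun y : ℝ => (p.1, y)) (𝓝 p.2) (𝓝 p) := by
    conv_rhs => rw [← Prod.mk.eta (p := p)]
    exact (continuous_const.prodMk continuous_id).tendsto p.2
  exact Filter.EventuallyEq.deriv_eq (h.comp_tendsto ht)

set_option maxHeartbeats 1000000 in
theorem stmt2 (c : ℝ → ℝ) (u : ℝ × ℝ → ℝ) (Ω : Set (ℝ × ℝ))
    (hΩ : IsOpen Ω)
    (hc : ContDiff ℝ 1 c)
    (hu : ContDiffOn ℝ 2 u Ω)
    (hpos : ∀ p ∈ Ω, 0 < c (u p))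
    (hwave : ∀ p ∈ Ω, pdt (pdt u) p = (c (u p)) ^ 2 * pdx (pdx u) p) :
    ∀ p ∈ Ω,
      (pdt (fun q => Rv c u q / Real.sqrt (c (u q))) p
          - c (u p) * pdx (fun q => Rv c u q / Real.sqrt (c (u q))) p
        = -(deriv c (u p) / (2 * (c (u p)) ^ ((3 : ℝ) / 2))) * (Sv c u p) ^ 2)
      ∧ ((∀ θ, 0 ≤ deriv c θ) →
          pdt (fun q => Rv c u q / Real.sqrt (c (u q))) p
            - c (u p) * pdx (fun q => Rv c u q / Real.sqrt (c (u q))) p ≤ 0) := by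
  intro p hp
  have hmem : Ω ∈ 𝓝 p := hΩ.mem_nhds hp
  have hud : ∀ q ∈ Ω, DifferentiableAt ℝ u q := fun q hq =>
    (((hu q hq).contDiffAt (hΩ.mem_nhds hq)).differentiableAt two_ne_zero)
  set w := c (u p) with hw
  have w0 : 0 < w := hpos p hp
  set s := Real.sqrt w with hs
  have s0 : 0 < s := Real.sqrt_pos.2 w0
  have hs2 : s ^ 2 = w := Real.sq_sqrt w0.le
  set cp := deriv c (u p) with hcp
  -- second derivative
  have hu' : ContDiffOn ℝ 1 (fderiv ℝ u) Ω := hu.fderiv_of_isOpen hΩ le_rfl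
  set B := fderiv ℝ (fderiv ℝ u) p with hBdef
  have hB : HasFDerivAt (fderiv ℝ u) B p :=
    (((hu' p hp).contDiffAt hmem).differentiableAt one_ne_zero).hasFDerivAt
  have hsymm : ∀ v w, B v w = B w v :=
    second_derivative_symmetric_of_eventually
      (Filter.eventually_of_mem hmem fun q hq => (hud q hq).hasFDerivAt) hB
  -- directional second derivative functions
  have hvt : HasFDerivAt (fun q => fderiv ℝ u q ((1 : ℝ), (0 : ℝ)))
      ((ContinuousLinearMap.apply ℝ ℝ ((1 : ℝ), (0 : ℝ))).comp B) p :=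
    (ContinuousLinearMap.apply ℝ ℝ ((1 : ℝ), (0 : ℝ))).hasFDerivAt.comp p hB
  have hvx : HasFDerivAt (fun q => fderiv ℝ u q ((0 : ℝ), (1 : ℝ)))
      ((ContinuousLinearMap.apply ℝ ℝ ((0 : ℝ), (1 : ℝ))).comp B) p :=
    (ContinuousLinearMap.apply ℝ ℝ ((0 : ℝ), (1 : ℝ))).hasFDerivAt.comp p hB
  -- c ∘ u
  have hcu : HasFDerivAt (fun q => c (u q)) (cp • fderiv ℝ u p) p :=
    ((hc.differentiable one_ne_zero (u p)).hasDerivAt).comp_hasFDerivAt p (hud p hp).hasFDerivAt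
  have hcup : c (u p) = w := rfl
  -- inverse of sqrt of c ∘ u
  have hinv : HasFDerivAt (fun q => (Real.sqrt (c (u q)))⁻¹)
      ((-(1 / (2 * s)) / s ^ 2) • (cp • fderiv ℝ u p)) p := by
    have h1 : HasDerivAt (fun y => (Real.sqrt y)⁻¹) (-(1 / (2 * s)) / s ^ 2) w :=
      (Real.hasDerivAt_sqrt w0.ne').inv s0.ne'
    exact h1.comp_hasFDerivAt (h₂ := fun y => (Real.sqrt y)⁻¹) (f := fun q => c (u q)) p hcu
  -- numerator
  have hN : HasFDerivAt
      (fun q => fderiv ℝ u q ((1 : ℝ), (0 : ℝ)) + c (u q) * fderiv ℝ u q ((0 : ℝ), (1 : ℝ)))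
      (((ContinuousLinearMap.apply ℝ ℝ ((1 : ℝ), (0 : ℝ))).comp B) +
        (w • ((ContinuousLinearMap.apply ℝ ℝ ((0 : ℝ), (1 : ℝ))).comp B) +
          fderiv ℝ u p ((0 : ℝ), (1 : ℝ)) • (cp • fderiv ℝ u p))) p :=
    hvt.add (hcu.mul hvx)
  -- G and its derivative
  set L := (((ContinuousLinearMap.apply ℝ ℝ ((1 : ℝ), (0 : ℝ))).comp B) +
        (w • ((ContinuousLinearMap.apply ℝ ℝ ((0 : ℝ), (1 : ℝ))).comp B) +
          fderiv ℝ u p ((0 : ℝ), (1 : ℝ)) • (cp • fderiv ℝ u p))) with hLdef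
  have hG : HasFDerivAt
      (fun q => (fderiv ℝ u q ((1 : ℝ), (0 : ℝ)) + c (u q) * fderiv ℝ u q ((0 : ℝ), (1 : ℝ))) *
        (Real.sqrt (c (u q)))⁻¹)
      ((fderiv ℝ u p ((1 : ℝ), (0 : ℝ)) + w * fderiv ℝ u p ((0 : ℝ), (1 : ℝ))) •
          ((-(1 / (2 * s)) / s ^ 2) • (cp • fderiv ℝ u p)) + s⁻¹ • L) p :=
    hN.mul hinv
  set G := fun q => (fderiv ℝ u q ((1 : ℝ), (0 : ℝ)) + c (u q) * fderiv ℝ u q ((0 : ℝ), (1 : ℝ))) *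
        (Real.sqrt (c (u q)))⁻¹ with hGdef
  -- F agrees with G near p
  have hFG : (fun q => Rv c u q / Real.sqrt (c (u q))) =ᶠ[𝓝 p] G :=
    Filter.eventually_of_mem hmem fun q hq => by
      simp only [hGdef, Rv, pdt_eq' (hud q hq), pdx_eq' (hud q hq), div_eq_mul_inv]
  have hut : (fun q => pdt u q) =ᶠ[𝓝 p] (fun q => fderiv ℝ u q ((1 : ℝ), (0 : ℝ))) :=
    Filter.eventually_of_mem hmem fun q hq => pdt_eq' (hud q hq)
  have hux : (fun q => pdx u q) =ᶠ[𝓝 p] (fun q => fderiv ℝ u q ((0 : ℝ), (1 : ℝ))) :=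
    Filter.eventually_of_mem hmem fun q hq => pdx_eq' (hud q hq)
  -- abbreviations for values at p
  set T := fderiv ℝ u p ((1 : ℝ), (0 : ℝ)) with hT
  set X := fderiv ℝ u p ((0 : ℝ), (1 : ℝ)) with hX
  set Btt := B ((1 : ℝ), (0 : ℝ)) ((1 : ℝ), (0 : ℝ)) with hBtt
  set Btx := B ((1 : ℝ), (0 : ℝ)) ((0 : ℝ), (1 : ℝ)) with hBtx
  set Bxt := B ((0 : ℝ), (1 : ℝ)) ((1 : ℝ), (0 : ℝ)) with hBxt
  set Bxx := B ((0 : ℝ), (1 : ℝ)) ((0 : ℝ), (1 : ℝ)) with hBxx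
  have hsym1 : Btx = Bxt := hsymm _ _
  -- wave equation at p
  have hwv : Btt = w ^ 2 * Bxx := by
    have h1 : pdt (pdt u) p = Btt := by
      rw [pdt_congr' hut, pdt_eq' hvt.differentiableAt, hvt.fderiv]
      rfl
    have h2 : pdx (pdx u) p = Bxx := by
      rw [pdx_congr' hux, pdx_eq' hvx.differentiableAt, hvx.fderiv]
      rfl
    rw [← h1, ← h2, hwave p hp]
  -- compute the two partial derivatives of F
  have hpt : pdt (fun q => Rv c u q / Real.sqrt (c (u q))) p =
      ((T + w * X) * ((-(1 / (2 * s)) / s ^ 2) * (cp * T)) +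
        s⁻¹ * (Btt + (w * Btx + X * (cp * T)))) := by
    rw [pdt_congr' hFG, pdt_eq' hG.differentiableAt, hG.fderiv]
    simp [L, ContinuousLinearMap.add_apply, ContinuousLinearMap.smul_apply,
      ContinuousLinearMap.comp_apply, ContinuousLinearMap.apply_apply, smul_eq_mul]
    ring
  have hpx : pdx (fun q => Rv c u q / Real.sqrt (c (u q))) p =
      ((T + w * X) * ((-(1 / (2 * s)) / s ^ 2) * (cp * X)) +
        s⁻¹ * (Bxt + (w * Bxx + X * (cp * X)))) := by
    rw [pdx_congr' hFG, pdx_eq' hG.differentiableAt, hG.fderiv]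
    simp [L, ContinuousLinearMap.add_apply, ContinuousLinearMap.smul_apply,
      ContinuousLinearMap.comp_apply, ContinuousLinearMap.apply_apply, smul_eq_mul]
    ring
  -- S at p
  have hSv : Sv c u p = T - w * X := by
    simp only [Sv, pdt_eq' (hud p hp), pdx_eq' (hud p hp)]
    rfl
  have hw32 : w ^ ((3 : ℝ) / 2) = s ^ 3 := by
    rw [hs, Real.sqrt_eq_rpow, ← Real.rpow_natCast (w ^ ((1:ℝ)/2)) 3, ← Real.rpow_mul w0.le]
    norm_num
  have key : pdt (fun q => Rv c u q / Real.sqrt (c (u q))) p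
      - c (u p) * pdx (fun q => Rv c u q / Real.sqrt (c (u q))) p
      = -(cp / (2 * w ^ ((3 : ℝ) / 2))) * (Sv c u p) ^ 2 := by
    rw [hpt, hpx, hSv, hw32, hcup, hwv, hsym1, ← hs2]
    field_simp
    ring
  refine ⟨key, fun hcpos => ?_⟩
  rw [key]
  have : 0 ≤ cp / (2 * w ^ ((3 : ℝ) / 2)) :=
    div_nonneg (hcpos (u p)) (by positivity)
  nlinarith [sq_nonneg (Sv c u p), mul_nonneg this (sq_nonneg (Sv c u p))]
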